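/- arXiv:1908.04056 — 2 statements merged into one kernel-verified Lean document; each statement's English description precedes it below -/
import Mathlib

section
/- Let A = {0, 1, …, m} with m ≥ 1, let ℓ ≥ 3, and let v be any word over A with |v| ≤ ℓ − 3. Then the word m · (m−1) · m^{ℓ−2} · v (the letter m, the letter m−1, ℓ−2 copies of the letter m, followed by v) is Nyldon. -/
/-!
Common definitions: words over a totally ordered alphabet, lexicographic order,
Nyldon and Lyndon words, Nyldon-like sets, right Hall sets, and (circular) codes.
-/

/-- Strict lexicographic order on words: `u <_lex v` iff `u` is a proper prefix of `v`,
or `u` and `v` first differ at a position where `u` has the smaller letter. -/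
def LexLt {A : Type*} [LinearOrder A] (u v : List A) : Prop :=
  List.Lex (· < ·) u v

/-- Nonstrict lexicographic order on words. -/
def LexLe {A : Type*} [LinearOrder A] (u v : List A) : Prop :=
  u = v ∨ LexLt u v

theorem length_le_length_flatten_of_ne_nil {A : Type*} {s : List (List A)}
    (h : ∀ g ∈ s, g ≠ []) : s.length ≤ s.flatten.length := by
  induction s with
  | nil => simp
  | cons a t ih =>
    simp only [List.flatten_cons, List.length_append, List.length_cons]
    have ha : 1 ≤ a.length := List.length_pos_iff.mpr (h a (by simp))
    have ht := ih (fun g hg => h g (List.mem_cons_of_mem _ hg))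
    omega

theorem length_lt_length_flatten {A : Type*} {f : List A} {fs : List (List A)}
    (h2 : 2 ≤ fs.length) (hne : ∀ g ∈ fs, g ≠ []) (hf : f ∈ fs) :
    f.length < fs.flatten.length := by
  obtain ⟨s, t, rfl⟩ := List.append_of_mem hf
  have hs : s.length ≤ s.flatten.length :=
    length_le_length_flatten_of_ne_nil (fun g hg => hne g (by simp [hg]))
  have ht : t.length ≤ t.flatten.length :=
    length_le_length_flatten_of_ne_nil (fun g hg => hne g (by simp [hg]))
  have hlen : 2 ≤ s.length + t.length + 1 := by
    simp only [List.length_append, List.length_cons] at h2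
    omega
  have hj : (s ++ f :: t).flatten.length
      = s.flatten.length + f.length + t.flatten.length := by
    simp [List.flatten_append]
    omega
  omega

/-- A nonempty word is Nyldon if it admits no factorization into at least two
lexicographically nondecreasing Nyldon words. (Single letters are Nyldon vacuously,
since they admit no factorization into at least two nonempty words at all.) -/
def IsNyldon {A : Type*} [LinearOrder A] (w : List A) : Prop :=
  w ≠ [] ∧ ∀ fs : List (List A), 2 ≤ fs.length → (∀ g ∈ fs, g ≠ []) →
    fs.flatten = w → (∀ f ∈ fs, IsNyldon f) → fs.Chain' LexLe → False
termination_by w.length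
decreasing_by
  rename_i h2 hne hjoin hf
  subst hjoin
  exact length_lt_length_flatten h2 hne hf

/-- A nonempty word is Lyndon if it admits no factorization into at least two
lexicographically nonincreasing Lyndon words. -/
def IsLyndon {A : Type*} [LinearOrder A] (w : List A) : Prop :=
  w ≠ [] ∧ ∀ fs : List (List A), 2 ≤ fs.length → (∀ g ∈ fs, g ≠ []) →
    fs.flatten = w → (∀ f ∈ fs, IsLyndon f) →
    fs.Chain' (fun u v => LexLe v u) → False
termination_by w.length
decreasing_by
  rename_i h2 hne hjoin hf
  subst hjoin
  exact length_lt_length_flatten h2 hne hf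

/-- `fs` is a Nyldon factorization of `w`: a nondecreasing (under `≤_lex`) sequence
of Nyldon words whose concatenation is `w`. -/
def IsNyldonFactorization {A : Type*} [LinearOrder A] (fs : List (List A)) (w : List A) :
    Prop :=
  (∀ f ∈ fs, IsNyldon f) ∧ fs.Chain' LexLe ∧ fs.flatten = w

/-- The `j`-th power `u^j` of a word `u`: the concatenation of `j` copies of `u`. -/
def wordPow {A : Type*} (u : List A) (j : ℕ) : List A :=
  (List.replicate j u).flatten

/-- A word is primitive if it is not a power `u^j` of a word `u` with `j ≥ 2`. -/
def Primitive {A : Type*} (w : List A) : Prop :=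
  ∀ (u : List A) (j : ℕ), 2 ≤ j → w ≠ wordPow u j

/-- A Nyldon-like set over the alphabet `A`: a set `Mem` of nonempty words together with a
strict total order `lt` on it, such that every single letter is in the set, a word of length
at least `2` is in the set iff it admits no factorization into at least two nondecreasing
words of the set, and `f ≺ fg` whenever `f`, `g`, `fg` are all in the set. -/
structure NyldonLike (A : Type*) where
  /-- membership in `G` -/
  Mem : List A → Prop
  /-- the strict total order `≺` on `G` -/
  lt : List A → List A → Prop
  mem_ne_nil : ∀ w, Mem w → w ≠ []
  lt_irrefl : ∀ u, Mem u → ¬ lt u u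
  lt_trans : ∀ u v x, Mem u → Mem v → Mem x → lt u v → lt v x → lt u x
  lt_total : ∀ u v, Mem u → Mem v → lt u v ∨ u = v ∨ lt v u
  singleton_mem : ∀ a : A, Mem [a]
  mem_iff : ∀ w : List A, 2 ≤ w.length →
    (Mem w ↔ ¬ ∃ fs : List (List A), 2 ≤ fs.length ∧ (∀ f ∈ fs, Mem f) ∧
      fs.Chain' (fun u v => u = v ∨ lt u v) ∧ fs.flatten = w)
  append_lt : ∀ f g, Mem f → Mem g → Mem (f ++ g) → lt f (f ++ g)

namespace NyldonLike

variable {A : Type*}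

/-- The nonstrict order `⪯` associated to a Nyldon-like set. -/
def le (G : NyldonLike A) (u v : List A) : Prop :=
  u = v ∨ G.lt u v

/-- `fs` is a `G`-factorization of `w`: a nondecreasing (under `⪯`) sequence of
`G`-words whose concatenation is `w`. -/
def IsFactorization (G : NyldonLike A) (fs : List (List A)) (w : List A) : Prop :=
  (∀ f ∈ fs, G.Mem f) ∧ fs.Chain' G.le ∧ fs.flatten = w

end NyldonLike

/-- A factorization `fs` of a word written as the concatenation of `blocks` preserves the
blocks if each factor is the concatenation of a (nonempty) consecutive run of whole blocks. -/
def PreservesBlocks {A : Type*} (blocks fs : List (List A)) : Prop :=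
  ∃ P : List (List (List A)), (∀ p ∈ P, p ≠ []) ∧ P.flatten = blocks ∧
    P.map List.flatten = fs

/-- A right Hall set over the alphabet `A`: a set `Mem` of nonempty words with a strict
total order `lt` such that every nonempty word has a unique nondecreasing factorization
into words of the set, and `fg ≻ g` whenever `f`, `g`, `fg` are all in the set. -/
structure RightHallSet (A : Type*) where
  /-- membership in `H` -/
  Mem : List A → Prop
  /-- the strict total order `≺` on `H` -/
  lt : List A → List A → Prop
  mem_ne_nil : ∀ w, Mem w → w ≠ []
  lt_irrefl : ∀ u, Mem u → ¬ lt u u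
  lt_trans : ∀ u v x, Mem u → Mem v → Mem x → lt u v → lt v x → lt u x
  lt_total : ∀ u v, Mem u → Mem v → lt u v ∨ u = v ∨ lt v u
  unique_factorization : ∀ w : List A, w ≠ [] →
    ∃! fs : List (List A), (∀ f ∈ fs, Mem f) ∧
      fs.Chain' (fun u v => u = v ∨ lt u v) ∧ fs.flatten = w
  append_gt : ∀ f g, Mem f → Mem g → Mem (f ++ g) → lt g (f ++ g)

/-- A set `F` of words is a code if any two sequences of words of `F` with equal
concatenations are equal. -/
def IsCode {A : Type*} (F : List A → Prop) : Prop :=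
  ∀ l₁ l₂ : List (List A), (∀ f ∈ l₁, F f) → (∀ f ∈ l₂, F f) →
    l₁.flatten = l₂.flatten → l₁ = l₂

/-- `w ∈ F*`: `w` is a concatenation of (zero or more) words of `F`. -/
def CodeStar {A : Type*} (F : List A → Prop) (w : List A) : Prop :=
  ∃ l : List (List A), (∀ f ∈ l, F f) ∧ l.flatten = w

/-- A set `F` of words is a circular code if it is a code and whenever
`uv ∈ F*` and `vu ∈ F*`, also `u ∈ F*` and `v ∈ F*`. -/
def IsCircularCode {A : Type*} (F : List A → Prop) : Prop :=
  IsCode F ∧ ∀ u v : List A, CodeStar F (u ++ v) → CodeStar F (v ++ u) → CodeStar F u ∧ CodeStar F v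

theorem isNyldon_singleton {A : Type*} [LinearOrder A] (a : A) : IsNyldon [a] := by
  rw [IsNyldon]
  refine ⟨by simp, fun fs h2 hne hfl _ _ => ?_⟩
  have := length_le_length_flatten_of_ne_nil hne
  rw [hfl] at this
  simp at this
  omega

theorem lexle_singleton {A : Type*} [LinearOrder A] {a b : A} (u : List A) (hab : a ≤ b) :
    LexLe [a] (b :: u) := by
  rcases lt_or_eq_of_le hab with h | h
  · exact Or.inr (List.Lex.rel h)
  · subst h
    cases u with
    | nil => exact Or.inl rfl
    | cons c u => exact Or.inr (List.Lex.cons List.Lex.nil)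

theorem lex_cons_cases {A : Type*} [LinearOrder A] {a b : A} {u w : List A}
    (h : List.Lex (· < ·) (a :: u) (b :: w)) : a < b ∨ (a = b ∧ List.Lex (· < ·) u w) := by
  cases h with
  | rel h => exact Or.inl h
  | cons h => exact Or.inr ⟨rfl, h⟩

theorem not_lex_rep {A : Type*} [LinearOrder A] (M : A) (hM : ∀ x : A, x ≤ M) :
    ∀ (t : List A) (n : ℕ) (s : List A), t.length ≤ n →
      ¬ List.Lex (· < ·) (List.replicate n M ++ s) t := by
  intro t
  induction t with
  | nil =>
    intro n s _ h
    generalize List.replicate n M ++ s = l at h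
    cases h
  | cons c t ih =>
    intro n s hlen h
    cases n with
    | zero => simp at hlen
    | succ n =>
      rw [List.replicate_succ, List.cons_append] at h
      cases h with
      | rel h' => exact absurd h' (not_lt.mpr (hM c))
      | cons h' => exact ih n s (by simpa using hlen) h'

theorem not_isNyldon_of_le {A : Type*} [LinearOrder A] {a b : A} (u : List A) (hab : a ≤ b) :
    ¬ IsNyldon (a :: b :: u) := by
  intro hN
  rw [IsNyldon] at hN
  obtain ⟨-, H⟩ := hN
  by_cases hbu : IsNyldon (b :: u)
  · refine H [[a], b :: u] (by simp) (by simp) (by simp) ?_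
      (List.isChain_pair.mpr (lexle_singleton u hab))
    rintro f hf
    simp at hf
    rcases hf with rfl | rfl
    exacts [isNyldon_singleton a, hbu]
  · rw [IsNyldon] at hbu
    push_neg at hbu
    obtain ⟨fs, h2, hne, hfl, hNy, hch, -⟩ := hbu (by simp)
    rcases fs with _ | ⟨f0, fs'⟩
    · simp at h2
    have hf0ne := hne f0 (by simp)
    rcases f0 with _ | ⟨b0, f0t⟩
    · exact hf0ne rfl
    have hb0 : b0 = b := by
      simp only [List.flatten_cons, List.cons_append, List.cons.injEq] at hfl
      exact hfl.1
    subst hb0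
    refine H ([a] :: (b0 :: f0t) :: fs') (by simp) ?_ (by simp [List.flatten_cons] at hfl ⊢; exact hfl) ?_ ?_
    · intro g hg
      rcases List.mem_cons.mp hg with rfl | hg'
      · simp
      · exact hne g hg'
    · intro g hg
      rcases List.mem_cons.mp hg with rfl | hg'
      · exact isNyldon_singleton a
      · exact hNy g hg'
    · exact List.isChain_cons_cons.mpr ⟨lexle_singleton f0t hab, hch⟩

/-- Over `A = {0, 1, …, m}` with `m ≥ 1`, for `ℓ ≥ 3` and any word `v` with
`|v| ≤ ℓ - 3`, the word `m (m-1) m^{ℓ-2} v` is Nyldon. -/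
theorem stmt_17 (m ℓ : ℕ) (hm : 1 ≤ m) (hℓ : 3 ≤ ℓ)
    (v : List (Fin (m + 1))) (hv : v.length ≤ ℓ - 3) :
    IsNyldon (Fin.last m :: (⟨m - 1, by omega⟩ : Fin (m + 1)) ::
      (List.replicate (ℓ - 2) (Fin.last m) ++ v)) := by
  set M : Fin (m + 1) := Fin.last m with hMdef
  set M1 : Fin (m + 1) := ⟨m - 1, by omega⟩ with hM1def
  have hM1val : M1.val = m - 1 := rfl
  have hMval : M.val = m := rfl
  have hMM1 : M1 ≠ M := by
    intro h
    have := congrArg Fin.val h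
    rw [hM1val, hMval] at this
    omega
  rw [IsNyldon]
  refine ⟨by simp, ?_⟩
  intro fs h2 hne hfl hNy hch
  rcases fs with _ | ⟨w1, fs1⟩
  · simp at h2
  rcases fs1 with _ | ⟨w2, rest⟩
  · simp at h2
  have h12 : LexLe w1 w2 := (List.isChain_cons_cons.mp hch).1
  have hw1ne := hne w1 (by simp)
  have hw2ne := hne w2 (by simp)
  rcases w1 with _ | ⟨c, w1'⟩
  · exact hw1ne rfl
  rcases w2 with _ | ⟨c2, s2⟩
  · exact hw2ne rfl
  simp only [List.flatten_cons, List.cons_append, List.append_assoc] at hfl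
  rcases w1' with _ | ⟨d, s1⟩
  · -- w1 = [c]
    simp only [List.nil_append, List.cons.injEq] at hfl
    obtain ⟨rfl, rfl, -⟩ := hfl
    rcases h12 with heq | hlex
    · exact hMM1 (by injection heq.symm)
    · rcases lex_cons_cases hlex with h | ⟨h, h'⟩
      · exact absurd h (not_lt.mpr (by rw [Fin.le_def, hM1val, hMval]; omega))
      · exact hMM1 h.symm
  · -- w1 = c :: d :: s1
    simp only [List.cons_append, List.append_assoc, List.cons.injEq] at hfl
    obtain ⟨rfl, rfl, hs1⟩ := hfl
    -- hs1 : s1 ++ (c2 :: (s2 ++ rest.flatten)) = replicate (ℓ-2) M ++ v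
    -- derive shape of w2
    obtain ⟨s2', rfl, rfl, hbranch⟩ :
        ∃ s2', c2 = M ∧ s2 = M1 :: s2' ∧ (s2' = s1 ∨ List.Lex (· < ·) s1 s2') := by
      rcases h12 with heq | hlex
      · obtain ⟨rfl, rfl⟩ : c2 = M ∧ s2 = M1 :: s1 := by
          have h1 : M = c2 := by injection heq
          have h2 : M1 :: s1 = s2 := by
            have := heq
            injection this with _ h
          exact ⟨h1.symm, h2.symm⟩
        exact ⟨s1, rfl, rfl, Or.inl rfl⟩
      · rcases lex_cons_cases hlex with h | ⟨h, hlex2⟩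
        · exact absurd (lt_of_lt_of_le h (Fin.le_last c2)) (lt_irrefl M)
        · subst h
          rcases s2 with _ | ⟨d2, s2'⟩
          · exact absurd hlex2 (fun hh => by
              generalize (M1 :: s1 : List (Fin (m+1))) = l at hh
              cases hh)
          have hd2 : d2 = M1 := by
            rcases lex_cons_cases hlex2 with h | ⟨h, -⟩
            · -- M1 < d2, but Nyldon forces d2 < M
              exfalso
              have hny2 : IsNyldon (M :: d2 :: s2') := hNy _ (by simp)
              have hd2M : d2 < M := by
                by_contra hcon
                exact not_isNyldon_of_le s2' (not_lt.mp hcon) hny2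
              rw [Fin.lt_def] at h hd2M
              rw [hM1val] at h
              rw [hMval] at hd2M
              omega
            · exact h.symm
          subst hd2
          exact ⟨s2', rfl, rfl, Or.inr (by
            rcases lex_cons_cases hlex2 with h | ⟨-, h⟩
            · exact absurd h (lt_irrefl M1)
            · exact h)⟩
    -- lengths
    have hlen : s1.length + s2'.length + (List.map List.length rest).sum + 2
        = (ℓ - 2) + v.length := by
      have := congrArg List.length hs1
      simp at this
      omega
    -- position: s1.length ≥ ℓ - 3
    have hpos : ℓ - 3 ≤ s1.length := by
      by_contra hcon
      push_neg at hcon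
      have h1 := congrArg (fun l => l[s1.length + 1]?) hs1
      rw [List.getElem?_append_right (by omega), List.getElem?_append_left (by
        simpa using by omega : s1.length + 1 < (List.replicate (ℓ - 2) M).length)] at h1
      have e : s1.length + 1 - s1.length = 1 := by omega
      rw [e] at h1
      simp only [List.cons_append, List.getElem?_cons_succ, List.getElem?_cons_zero] at h1
      rw [List.getElem?_replicate] at h1
      rw [if_pos (by omega)] at h1
      exact hMM1 (by injection h1)
    rcases hbranch with rfl | hlex3
    · omega
    · have htake : List.take (ℓ - 3) s1 = List.replicate (ℓ - 3) M := by
        have h := congrArg (List.take (ℓ - 3)) hs1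
        rw [List.take_append, List.take_append,
          List.take_replicate] at h
        simp only [List.length_replicate] at h
        rw [show ℓ - 3 - s1.length = 0 from by omega,
          show min (ℓ - 3) (ℓ - 2) = ℓ - 3 from by omega,
          show ℓ - 3 - (ℓ - 2) = 0 from by omega] at h
        simpa using h
      have hs1eq : s1 = List.replicate (ℓ - 3) M ++ s1.drop (ℓ - 3) := by
        conv_lhs => rw [← List.take_append_drop (ℓ - 3) s1]
        rw [htake]
      exact not_lex_rep M (fun x => Fin.le_last x) s2' (ℓ - 3) _ (by omega) (hs1eq ▸ hlex3)
end

section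
/- Let w be a nonempty word over A such that w <_lex s for every proper nonempty suffix s of w that is Lyndon. Then w is Lyndon. -/
-- auxiliary
theorem lexLt_trans {A : Type*} [LinearOrder A] {u v x : List A}
    (h1 : LexLt u v) (h2 : LexLt v x) : LexLt u x :=
  _root_.lt_trans (show u < v from h1) h2

theorem lexLt_irrefl {A : Type*} [LinearOrder A] (u : List A) : ¬ LexLt u u :=
  _root_.lt_irrefl (α := List A) u

theorem lexLt_append {A : Type*} [LinearOrder A] (u v : List A) (hv : v ≠ []) :
    LexLt u (u ++ v) := by
  induction u with
  | nil => cases v with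
    | nil => exact absurd rfl hv
    | cons a l => exact List.Lex.nil
  | cons a u ih => exact List.Lex.cons ih


/-- If a nonempty word `w` is lexicographically smaller than all of its
proper nonempty Lyndon suffixes, then `w` is Lyndon. -/
theorem stmt_19 {A : Type*} [LinearOrder A] [Fintype A] (hA : 2 ≤ Fintype.card A)
    (w : List A) (hw : w ≠ [])
    (h : ∀ s : List A, s <:+ w → s ≠ w → s ≠ [] → IsLyndon s → LexLt w s) :
    IsLyndon w := by
  rw [IsLyndon]
  refine ⟨hw, fun fs h2 hne hjoin hf hchain => ?_⟩
  -- head and last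
  obtain ⟨f₁, rest, rfl⟩ : ∃ f₁ rest, fs = f₁ :: rest := by
    cases fs with
    | nil => simp at h2
    | cons a t => exact ⟨a, t, rfl⟩
  have hrest : rest ≠ [] := by
    intro hr; subst hr; simp at h2
  -- f₁ is a proper prefix of w
  have hflat : f₁ ++ rest.flatten = w := by simpa using hjoin
  have hrflat : rest.flatten ≠ [] := by
    cases rest with
    | nil => exact absurd rfl hrest
    | cons b t =>
      simp only [List.flatten_cons, ne_eq, List.append_eq_nil_iff]
      intro ⟨hb, _⟩
      exact hne b (by simp) hb
  have h1 : LexLt f₁ w := hflat ▸ lexLt_append f₁ rest.flatten hrflat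
  -- last factor
  set f := rest.getLast hrest with hfdef
  have hfmem : f ∈ (f₁ :: rest) := List.mem_cons_of_mem _ (List.getLast_mem hrest)
  have hfsuf : f <:+ w := by
    refine ⟨f₁ ++ rest.dropLast.flatten, ?_⟩
    have : rest.dropLast ++ [f] = rest := List.dropLast_append_getLast hrest
    calc f₁ ++ rest.dropLast.flatten ++ f
        = f₁ ++ (rest.dropLast ++ [f]).flatten := by
          simp [List.flatten_append, List.append_assoc]
      _ = w := by rw [this]; exact hflat
  have hfne : f ≠ [] := hne f hfmem
  have hfney : f ≠ w := by
    intro he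
    have := length_lt_length_flatten h2 hne hfmem
    rw [hjoin, he] at this
    omega
  have hwf : LexLt w f := h f hfsuf hfney hfne (hf f hfmem)
  -- chain gives LexLe f f₁
  haveI : IsTrans (List A) (fun u v => LexLe v u) := by
    constructor
    rintro a b c (rfl | h1) (rfl | h2)
    · exact Or.inl rfl
    · exact Or.inr h2
    · exact Or.inr h1
    · exact Or.inr (lexLt_trans h2 h1)
  have hpw := List.isChain_iff_pairwise.mp hchain
  have hff₁ : LexLe f f₁ :=
    (List.pairwise_cons.mp hpw).1 f (List.getLast_mem hrest)
  rcases hff₁ with rfl | hlt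
  · exact lexLt_irrefl w (lexLt_trans hwf h1)
  · exact lexLt_irrefl w (lexLt_trans hwf (lexLt_trans hlt h1))
end
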